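/- Let (τ_n)_{n≥0} be independent nonnegative square-integrable random variables with means m_n := E[τ_n] > 0 such that Σ_n m_n < ∞. Set s_n := Σ_{k≥n} m_k and T_n := Σ_{k≥n} τ_k. Assume (i) sup_n E[τ_n²]/m_n² < ∞ and (ii) Σ_n (m_n/s_n)² < ∞. Then T_n/s_n → 1 almost surely as n → ∞. -/

import Mathlib

open Filter MeasureTheory ProbabilityTheory Finset

lemma aux_sq_int {Ω : Type*} [MeasurableSpace Ω] (P : Measure Ω) [IsProbabilityMeasure P]
    (X : ℕ → Ω → ℝ) (hXL2 : ∀ k, MemLp (X k) 2 P)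
    (hX0 : ∀ k, ∫ ω, X k ω ∂P = 0)
    (hpind : ∀ i j, i ≠ j → IndepFun (X i) (X j) P) (N : ℕ) :
    ∫ ω, (∑ k ∈ range N, X k ω) ^ 2 ∂P = ∑ k ∈ range N, ∫ ω, (X k ω)^2 ∂P := by
  have hSL2 : MemLp (∑ k ∈ range N, X k) 2 P := memLp_finset_sum' _ (fun k _ => hXL2 k)
  have hvar := variance_eq_sub (μ := P) hSL2
  have hvs : variance (∑ k ∈ range N, X k) P = ∑ k ∈ range N, variance (X k) P :=
    IndepFun.variance_sum (fun i _ => hXL2 i) (fun i _ j _ hij => hpind i j hij)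
  have hES : ∫ ω, (∑ k ∈ range N, X k) ω ∂P = 0 := by
    simp only [Finset.sum_apply]
    rw [integral_finset_sum _ (fun k _ => (hXL2 k).integrable one_le_two)]
    simp [hX0]
  have hvk : ∀ k, variance (X k) P = ∫ ω, (X k ω)^2 ∂P := by
    intro k
    rw [variance_eq_sub (hXL2 k)]
    simp only [Pi.pow_apply]
    rw [hX0]; ring
  rw [hvs, hES] at hvar
  simp only [ne_eq, OfNat.ofNat_ne_zero, not_false_eq_true, zero_pow, sub_zero] at hvar
  simp only [Pi.pow_apply, Finset.sum_apply] at hvar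
  rw [← hvar]
  exact Finset.sum_congr rfl (fun k _ => hvk k)

lemma aux_cheb {Ω : Type*} [MeasurableSpace Ω] (P : Measure Ω) [IsProbabilityMeasure P]
    (X : ℕ → Ω → ℝ) (hXL2 : ∀ k, MemLp (X k) 2 P)
    (hX0 : ∀ k, ∫ ω, X k ω ∂P = 0)
    (hpind : ∀ i j, i ≠ j → IndepFun (X i) (X j) P)
    (B : ℝ) (hB : ∀ N, ∑ k ∈ range N, ∫ ω, (X k ω)^2 ∂P ≤ B)
    (D : Ω → ℝ)
    (hD : ∀ᵐ ω ∂P, Tendsto (fun N => ∑ k ∈ range N, X k ω) atTop (nhds (D ω)))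
    (c : ℝ) (hc : 0 < c) :
    P {ω | c ≤ |D ω|} ≤ ENNReal.ofReal B / ENNReal.ofReal (c^2) := by
  have haesm : ∀ N, AEStronglyMeasurable (fun ω => ∑ k ∈ range N, X k ω) P := by
    intro N
    have h := (memLp_finset_sum' (range N) (fun k (_ : k ∈ range N) => hXL2 k)).aestronglyMeasurable
    have he : (fun ω => ∑ k ∈ range N, X k ω) = ∑ k ∈ range N, X k := by
      ext ω; simp
    rw [he]; exact h
  set g : ℕ → Ω → ENNReal := fun N ω => ENNReal.ofReal ((∑ k ∈ range N, X k ω)^2) with hg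
  have hgm : ∀ N, AEMeasurable (g N) P := by
    intro N
    exact ENNReal.measurable_ofReal.comp_aemeasurable (((haesm N).aemeasurable).pow_const 2)
  set L : Ω → ENNReal := fun ω => Filter.liminf (fun N => g N ω) Filter.atTop with hL
  have hLae : L =ᵐ[P] fun ω => Filter.liminf (fun N => (hgm N).mk _ ω) Filter.atTop := by
    have : ∀ᵐ ω ∂P, ∀ N, g N ω = (hgm N).mk _ ω := ae_all_iff.2 (fun N => (hgm N).ae_eq_mk)
    filter_upwards [this] with ω h
    simp only [hL]
    exact congrArg (fun f => Filter.liminf f Filter.atTop) (funext h)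
  have hLm : AEMeasurable L P :=
    (Measurable.liminf (fun N => (hgm N).measurable_mk)).aemeasurable.congr hLae.symm
  -- a.e. identification of L
  have hae1 : ∀ᵐ ω ∂P, L ω = ENNReal.ofReal ((D ω)^2) := by
    filter_upwards [hD] with ω hω
    have : Tendsto (fun N => g N ω) atTop (nhds (ENNReal.ofReal ((D ω)^2))) := by
      exact (ENNReal.continuous_ofReal.tendsto _).comp ((continuous_pow 2).continuousAt.tendsto.comp hω)
    exact this.liminf_eq
  -- lintegral bound
  have hint : ∀ N, Integrable (fun ω => (∑ k ∈ range N, X k ω)^2) P := by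
    intro N
    have h := (memLp_finset_sum' (range N) (fun k (_ : k ∈ range N) => hXL2 k)).integrable_sq
    apply h.congr
    filter_upwards with ω
    simp
  have hlin : ∫⁻ ω, L ω ∂P ≤ ENNReal.ofReal B := by
    have h1 : ∫⁻ ω, L ω ∂P ≤ Filter.liminf (fun N => ∫⁻ ω, g N ω ∂P) Filter.atTop :=
      lintegral_liminf_le' hgm
    have h2 : ∀ N, ∫⁻ ω, g N ω ∂P ≤ ENNReal.ofReal B := by
      intro N
      rw [hg]
      rw [← ofReal_integral_eq_lintegral_ofReal (hint N)
        (Filter.Eventually.of_forall (fun ω => sq_nonneg _))]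
      apply ENNReal.ofReal_le_ofReal
      calc ∫ ω, (∑ k ∈ range N, X k ω)^2 ∂P
          = ∑ k ∈ range N, ∫ ω, (X k ω)^2 ∂P := aux_sq_int P X hXL2 hX0 hpind N
        _ ≤ B := hB N
    refine h1.trans ?_
    have := Filter.liminf_le_liminf (Filter.Eventually.of_forall h2)
      (f := Filter.atTop)
    simpa using this.trans_eq (Filter.liminf_const _)
  -- Markov
  have hmarkov := mul_meas_ge_le_lintegral₀ hLm (ENNReal.ofReal (c^2))
  have hsub : P {ω | c ≤ |D ω|} ≤ P {ω | ENNReal.ofReal (c^2) ≤ L ω} := by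
    have hset : {ω | ENNReal.ofReal (c^2) ≤ ENNReal.ofReal ((D ω)^2)} =ᵐ[P]
        {ω | ENNReal.ofReal (c^2) ≤ L ω} := by
      rw [Filter.eventuallyEq_set]
      filter_upwards [hae1] with ω h
      rw [h]
    have h1 : P {ω | c ≤ |D ω|} ≤ P {ω | ENNReal.ofReal (c^2) ≤ ENNReal.ofReal ((D ω)^2)} := by
      apply measure_mono
      intro ω hω
      simp only [Set.mem_setOf_eq] at hω ⊢
      apply ENNReal.ofReal_le_ofReal
      calc c^2 ≤ |D ω|^2 := pow_le_pow_left₀ hc.le hω 2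
        _ = (D ω)^2 := sq_abs _
    exact h1.trans_eq (measure_congr hset)
  have hc2 : ENNReal.ofReal (c^2) ≠ 0 := by
    simp [ENNReal.ofReal_eq_zero, not_le, pow_pos hc, hc.ne']
  refine hsub.trans ?_
  refine ENNReal.le_div_iff_mul_le (Or.inl hc2) (Or.inl ENNReal.ofReal_ne_top) |>.2 ?_
  calc P {ω | ENNReal.ofReal (c^2) ≤ L ω} * ENNReal.ofReal (c^2)
      = ENNReal.ofReal (c^2) * P {ω | ENNReal.ofReal (c^2) ≤ L ω} := mul_comm _ _
    _ ≤ ∫⁻ ω, L ω ∂P := hmarkov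
    _ ≤ ENNReal.ofReal B := hlin

lemma aux_swap (A b G : ℕ → ENNReal) (n : ℕ → ℕ)
    (hG : ∀ i, (∑' j, (if n j ≤ i then b j else 0)) ≤ G i) :
    ∑' j, (∑' k, A (n j + k)) * b j ≤ ∑' i, A i * G i := by
  have hre : ∀ j, (∑' k, A (n j + k)) = ∑' i, (if n j ≤ i then A i else 0) := by
    intro j
    have hinj : Function.Injective (fun k => n j + k) := fun a b h => by
      simpa using h
    have hsupp : Function.support (fun i => if n j ≤ i then A i else 0) ⊆
        Set.range (fun k => n j + k) := by
      intro x hx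
      simp only [Function.mem_support, ne_eq, ite_eq_right_iff, not_forall] at hx
      obtain ⟨hle, -⟩ := hx
      exact ⟨x - n j, by simpa using Nat.add_sub_cancel' hle⟩
    have := Function.Injective.tsum_eq hinj (f := fun i => if n j ≤ i then A i else 0) hsupp
    rw [← this]
    exact tsum_congr fun k => by simp
  calc ∑' j, (∑' k, A (n j + k)) * b j
      = ∑' j, ∑' i, (if n j ≤ i then A i else 0) * b j := by
        exact tsum_congr fun j => by rw [hre j, ENNReal.tsum_mul_right]
    _ = ∑' i, ∑' j, (if n j ≤ i then A i else 0) * b j := ENNReal.tsum_comm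
    _ ≤ ∑' i, A i * G i := by
        refine Summable.tsum_le_tsum (fun i => ?_) ENNReal.summable ENNReal.summable
        calc ∑' j, (if n j ≤ i then A i else 0) * b j
            = ∑' j, A i * (if n j ≤ i then b j else 0) := tsum_congr fun j => by
              split <;> simp
          _ = A i * ∑' j, (if n j ≤ i then b j else 0) := ENNReal.tsum_mul_left
          _ ≤ A i * G i := mul_le_mul_right (hG i) _

lemma aux_tail_sum (a s : ℕ → ℝ) (ha0 : ∀ k, 0 ≤ a k) (hasum : Summable a)
    (hspos : ∀ k, 0 < s k) (hanti : Antitone s)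
    (hq : Summable fun k => a k / s k ^ 2)
    (ρ : ℝ) (hρ0 : 0 < ρ) (hρ1 : ρ < 1)
    (n : ℕ → ℕ) (hmono : Monotone n)
    (hup : ∀ j, s (n j) ≤ s 0 * ρ ^ j)
    (J : ℕ) (hlow : ∀ j, J ≤ j → s 0 * ρ ^ (j+1) ≤ s (n j))
    (hinf : ∀ i, ∃ j, i < n j) :
    ∑' j, ENNReal.ofReal ((∑' k, a (n j + k)) / s (n j) ^ 2) ≠ ⊤ := by
  classical
  set r : ℝ := (ρ^2)⁻¹ with hrdef
  have hρ2 : 0 < ρ^2 := pow_pos hρ0 2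
  have hρ21 : ρ^2 < 1 := by nlinarith
  have hr0 : 0 < r := inv_pos.2 hρ2
  have hr1 : 1 < r := (one_lt_inv₀ hρ2).2 hρ21
  set K : ℝ := s 0 ^ 2 * ρ ^ 2 with hKdef
  have hK0 : 0 < K := mul_pos (pow_pos (hspos 0) 2) hρ2
  set f : ℕ → ENNReal := fun j => ENNReal.ofReal ((∑' k, a (n j + k)) / s (n j) ^ 2) with hfdef
  set A : ℕ → ENNReal := fun i => ENNReal.ofReal (a i) with hAdef
  set b : ℕ → ENNReal := fun j => ENNReal.ofReal (r ^ j * K⁻¹) with hbdef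
  have htail_nonneg : ∀ j, 0 ≤ ∑' k, a (n j + k) := fun j => tsum_nonneg (fun k => ha0 _)
  have htailsum : ∀ j, Summable (fun k => a (n j + k)) := by
    intro j
    exact hasum.comp_injective (fun x y h => by simpa using h)
  -- termwise bound for j ≥ J
  have hterm : ∀ j, J ≤ j → f j ≤ (∑' k, A (n j + k)) * b j := by
    intro j hj
    have hA : (∑' k, A (n j + k)) = ENNReal.ofReal (∑' k, a (n j + k)) :=
      (ENNReal.ofReal_tsum_of_nonneg (fun k => ha0 _) (htailsum j)).symm
    rw [hA, hbdef]
    rw [← ENNReal.ofReal_mul (htail_nonneg j)]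
    apply ENNReal.ofReal_le_ofReal
    have hpos : 0 < s 0 * ρ ^ (j+1) := mul_pos (hspos 0) (pow_pos hρ0 _)
    have h1 : (∑' k, a (n j + k)) / s (n j) ^ 2 ≤ (∑' k, a (n j + k)) / (s 0 * ρ ^ (j+1))^2 := by
      apply div_le_div_of_nonneg_left (htail_nonneg j) (pow_pos hpos 2)
      exact pow_le_pow_left₀ hpos.le (hlow j hj) 2
    refine h1.trans_eq ?_
    have heq : (s 0 * ρ ^ (j+1))^2 = K * (ρ^2)^j := by rw [hKdef]; ring
    rw [heq, hrdef]
    rw [div_eq_mul_inv, mul_inv, inv_pow]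
    ring
  -- the inner geometric bound
  have hG : ∀ i, (∑' j, (if n j ≤ i then b j else 0)) ≤
      ENNReal.ofReal ((s 0 / s i)^2 * (r / (r-1)) * K⁻¹) := by
    intro i
    have hex : ∃ j, i < n j := hinf i
    set c := Nat.find hex with hcdef
    have hci : i < n c := Nat.find_spec hex
    have hkey : ∀ j, n j ≤ i → j < c := by
      intro j hji
      by_contra h
      push_neg at h
      have := hmono h
      omega
    have h1 : (∑' j, (if n j ≤ i then b j else 0)) =
        ∑ j ∈ range c, (if n j ≤ i then b j else 0) := by
      apply tsum_eq_sum
      intro j hj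
      simp only [mem_range, not_lt] at hj
      have : ¬ n j ≤ i := fun h => by have := hkey j h; omega
      simp [this]
    rw [h1]
    have h2 : ∑ j ∈ range c, (if n j ≤ i then b j else 0) ≤ ∑ j ∈ range c, b j := by
      apply Finset.sum_le_sum
      intro j _
      split
      · exact le_rfl
      · exact zero_le
    refine h2.trans ?_
    have h3 : ∑ j ∈ range c, b j = ENNReal.ofReal (∑ j ∈ range c, r ^ j * K⁻¹) := by
      rw [ENNReal.ofReal_sum_of_nonneg]
      intro j _
      positivity
    rw [h3]
    apply ENNReal.ofReal_le_ofReal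
    rw [← Finset.sum_mul]
    have hKinv : (0:ℝ) ≤ K⁻¹ := by positivity
    have hgeom : ∑ j ∈ range c, r ^ j ≤ (s 0 / s i)^2 * (r / (r-1)) := by
      rcases Nat.eq_zero_or_pos c with hc0 | hcpos
      · rw [hc0]
        simp only [range_zero, Finset.sum_empty]
        exact mul_nonneg (sq_nonneg _) (div_nonneg hr0.le (by linarith))
      · set bb := c - 1 with hbbdef
        have hcbb : c = bb + 1 := by omega
        have hbb : n bb ≤ i := by
          by_contra h
          push_neg at h
          have hlt : bb < c := by omega
          rw [hcdef] at hlt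
          exact (Nat.find_min hex hlt) h
        rw [hcbb]
        have hsi : s i ≤ s 0 * ρ ^ bb := (hanti hbb).trans (hup bb)
        have hsi0 : 0 < s i := hspos i
        have hrb : r ^ bb ≤ (s 0 / s i)^2 := by
          have hρb : 0 < ρ ^ bb := pow_pos hρ0 _
          have h4 : s i / s 0 ≤ ρ ^ bb := by
            rw [div_le_iff₀ (hspos 0)]
            linarith [hsi]
          have h5 : (s i / s 0)^2 ≤ (ρ ^ bb)^2 :=
            pow_le_pow_left₀ (div_nonneg hsi0.le (hspos 0).le) h4 2
          have h6 : r ^ bb = ((ρ ^ bb)^2)⁻¹ := by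
            rw [hrdef, ← inv_pow, ← pow_mul, ← pow_mul, Nat.mul_comm]
            exact inv_pow ρ _
          rw [h6]
          have h8 : (0:ℝ) < (s 0 / s i)^2 := pow_pos (div_pos (hspos 0) hsi0) 2
          have h7 : ((s 0 / s i)^2)⁻¹ = (s i / s 0)^2 := by
            rw [← inv_pow, inv_div]
          rw [← h7] at h5
          calc ((ρ ^ bb)^2)⁻¹ ≤ (((s 0 / s i)^2)⁻¹)⁻¹ :=
                inv_anti₀ (inv_pos.2 h8) h5
            _ = (s 0 / s i)^2 := inv_inv _
        have hgeq : ∑ j ∈ range (bb+1), r ^ j = (r ^ (bb+1) - 1)/(r - 1) :=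
          geom_sum_eq hr1.ne' _
        rw [hgeq, div_le_iff₀ (by linarith : (0:ℝ) < r - 1)]
        have heq2 : (s 0 / s i)^2 * (r/(r-1)) * (r-1) = (s 0 / s i)^2 * r := by
          rw [mul_assoc, div_mul_cancel₀ r (ne_of_gt (by linarith : (0:ℝ) < r - 1))]
        rw [heq2, pow_succ]
        nlinarith [mul_le_mul_of_nonneg_right hrb hr0.le]
    calc (∑ j ∈ range c, r ^ j) * K⁻¹ ≤ ((s 0 / s i)^2 * (r / (r-1))) * K⁻¹ :=
      mul_le_mul_of_nonneg_right hgeom hKinv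
      _ = (s 0 / s i)^2 * (r / (r-1)) * K⁻¹ := by ring
  -- now combine
  have hsplit : ∑' j, f j = ∑ j ∈ range J, f j + ∑' i, f (i + J) :=
    (Summable.sum_add_tsum_nat_add' (f := f) (k := J) ENNReal.summable).symm
  have hfin : ∑ j ∈ range J, f j < ⊤ := by
    apply ENNReal.sum_lt_top.2
    intro j _
    exact ENNReal.ofReal_lt_top
  have htail : ∑' i, f (i + J) ≤ ∑' i, A i *
      ENNReal.ofReal ((s 0 / s i)^2 * (r / (r-1)) * K⁻¹) := by
    have step1 : ∑' i, f (i + J) ≤ ∑' j, (∑' k, A (n j + k)) * b j := by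
      have h1 : ∑' i, f (i + J) ≤ ∑' i, (∑' k, A (n (i + J) + k)) * b (i + J) :=
        Summable.tsum_le_tsum (fun i => hterm (i + J) (by omega)) ENNReal.summable ENNReal.summable
      refine h1.trans ?_
      have := Summable.sum_add_tsum_nat_add' (f := fun j => (∑' k, A (n j + k)) * b j) (k := J)
        ENNReal.summable
      calc ∑' i, (∑' k, A (n (i + J) + k)) * b (i + J)
          ≤ ∑ j ∈ range J, (∑' k, A (n j + k)) * b j +
            ∑' i, (∑' k, A (n (i + J) + k)) * b (i + J) := le_add_self
        _ = ∑' j, (∑' k, A (n j + k)) * b j := this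
    exact step1.trans (aux_swap A b _ n hG)
  have hfinal : ∑' i, A i * ENNReal.ofReal ((s 0 / s i)^2 * (r / (r-1)) * K⁻¹) ≠ ⊤ := by
    have heq : ∀ i, A i * ENNReal.ofReal ((s 0 / s i)^2 * (r / (r-1)) * K⁻¹) =
        ENNReal.ofReal ((a i / s i ^ 2) * (s 0 ^2 * (r / (r-1)) * K⁻¹)) := by
      intro i
      rw [hAdef, ← ENNReal.ofReal_mul (ha0 i)]
      congr 1
      have hsi := hspos i
      field_simp
    rw [tsum_congr heq]
    rw [← ENNReal.ofReal_tsum_of_nonneg]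
    · exact ENNReal.ofReal_ne_top
    · intro i
      apply mul_nonneg (div_nonneg (ha0 i) (sq_nonneg _))
      apply mul_nonneg (mul_nonneg (sq_nonneg _) (div_nonneg hr0.le (by linarith)))
      exact (inv_pos.2 hK0).le
    · exact hq.mul_right _
  rw [hsplit]
  exact (ENNReal.add_lt_top.2 ⟨hfin, lt_of_le_of_lt htail hfinal.lt_top⟩).ne

/-- Gradual regime, strong law of large numbers: if the `τ_n` are independent nonnegative
square-integrable with means `m_n > 0`, `Σ m_n < ∞`, `sup_n E[τ_n²]/m_n² < ∞` and
`Σ_n (m_n/s_n)² < ∞`, then `T_n/s_n → 1` almost surely, where `T_n = Σ_{k≥n} τ_k` and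
`s_n = Σ_{k≥n} m_k`. -/
theorem stmt9 {Ω : Type*} [MeasurableSpace Ω] (P : Measure Ω) [IsProbabilityMeasure P]
    (τ : ℕ → Ω → ℝ) (hτpos : ∀ n, ∀ ω, 0 ≤ τ n ω)
    (hL2 : ∀ n, MemLp (τ n) 2 P)
    (hindep : iIndepFun τ P)
    (m : ℕ → ℝ) (hm : ∀ n, m n = ∫ ω, τ n ω ∂P) (hmpos : ∀ n, 0 < m n)
    (hsum : Summable m)
    (s : ℕ → ℝ) (hs : ∀ n, s n = ∑' k : ℕ, m (n + k))
    (T : ℕ → Ω → ℝ) (hT : ∀ n ω, T n ω = ∑' k : ℕ, τ (n + k) ω)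
    (hmom2 : ∃ C : ℝ, ∀ n, (∫ ω, (τ n ω) ^ 2 ∂P) / (m n) ^ 2 ≤ C)
    (hsq : Summable (fun n => (m n / s n) ^ 2)) :
    ∀ᵐ ω ∂P, Tendsto (fun n => T n ω / s n) atTop (nhds 1) := by
  classical
  obtain ⟨C, hC⟩ := hmom2
  have hint : ∀ k, Integrable (τ k) P := fun k => (hL2 k).integrable one_le_two
  have hm0 : ∀ k, 0 ≤ m k := fun k => (hmpos k).le
  have hsummn : ∀ n, Summable (fun k => m (n + k)) := fun n =>
    hsum.comp_injective (fun a b h => by simpa using h)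
  have hrec : ∀ n, s n = m n + s (n + 1) := by
    intro n
    rw [hs n, hs (n+1), Summable.tsum_eq_zero_add (hsummn n)]
    simp only [Nat.add_zero]
    congr 1
    exact tsum_congr fun k => by congr 1; omega
  have hsnn : ∀ n, 0 ≤ s n := fun n => by
    rw [hs]; exact tsum_nonneg fun k => hm0 _
  have hmles : ∀ n, m n ≤ s n := fun n => by
    have := hsnn (n+1); rw [hrec n]; linarith
  have hspos : ∀ n, 0 < s n := fun n => lt_of_lt_of_le (hmpos n) (hmles n)
  have hanti : Antitone s := antitone_nat_of_succ_le (fun n => by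
    have := hmpos n; rw [hrec n]; linarith)
  have hs0 : Tendsto s atTop (nhds 0) := by
    have h1 : ∀ n, s n = (∑' k, m k) - ∑ i ∈ Finset.range n, m i := by
      intro n
      have h2 := Summable.sum_add_tsum_nat_add n hsum
      have h3 : ∑' k, m (n + k) = ∑' k, m (k + n) := tsum_congr fun k => by rw [Nat.add_comm]
      rw [hs n, h3]
      linarith
    have h4 : Tendsto (fun n => (∑' k, m k) - ∑ i ∈ Finset.range n, m i) atTop
        (nhds ((∑' k, m k) - (∑' k, m k))) :=
      tendsto_const_nhds.sub hsum.hasSum.tendsto_sum_nat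
    rw [sub_self] at h4
    exact h4.congr fun n => (h1 n).symm
  have hms0 : Tendsto (fun n => m n / s n) atTop (nhds 0) := by
    have h2 := hsq.tendsto_atTop_zero
    have h3 := (Real.continuous_sqrt.tendsto 0).comp h2
    rw [Real.sqrt_zero] at h3
    refine h3.congr fun n => ?_
    exact Real.sqrt_sq (div_nonneg (hm0 n) (hsnn n))
  -- second moments
  have hC0 : 0 ≤ C :=
    le_trans (div_nonneg (integral_nonneg fun ω => sq_nonneg _) (sq_nonneg _)) (hC 0)
  have hτsqle : ∀ k, ∫ ω, (τ k ω)^2 ∂P ≤ C * m k ^ 2 := by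
    intro k
    have h := hC k
    rw [div_le_iff₀ (pow_pos (hmpos k) 2)] at h
    linarith
  have hτsq : ∀ k, Integrable (fun ω => (τ k ω)^2) P := by
    intro k
    have h := (hL2 k).integrable_sq
    exact h.congr (Filter.Eventually.of_forall fun ω => by simp)
  have hwval : ∀ k, ∫ ω, (τ k ω - m k)^2 ∂P = (∫ ω, (τ k ω)^2 ∂P) - m k ^ 2 := by
    intro k
    have hexp : (fun ω => (τ k ω - m k)^2) =
        fun ω => ((τ k ω)^2 - (2 * m k) * τ k ω) + (m k)^2 := funext fun ω => by ring
    have hi2 : Integrable (fun ω => (2 * m k) * τ k ω) P := (hint k).const_mul _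
    have hi1 : Integrable (fun ω => τ k ω^2 - (2 * m k) * τ k ω) P := (hτsq k).sub hi2
    rw [hexp, integral_add hi1 (integrable_const _),
      integral_sub (hτsq k) hi2, integral_const_mul, integral_const]
    simp only [measure_univ, probReal_univ, ENNReal.toReal_one, smul_eq_mul, one_mul]
    rw [← hm k]
    ring
  have hw0 : ∀ k, 0 ≤ ∫ ω, (τ k ω - m k)^2 ∂P :=
    fun k => integral_nonneg fun ω => sq_nonneg _
  have hwle : ∀ k, ∫ ω, (τ k ω - m k)^2 ∂P ≤ C * m k ^ 2 := by
    intro k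
    rw [hwval k]
    have := hτsqle k
    have := sq_nonneg (m k)
    linarith
  have hm2sum : Summable (fun k => m k ^ 2) := by
    apply Summable.of_nonneg_of_le (fun k => sq_nonneg _) (fun k => ?_) (hsum.mul_left (s 0))
    have h1 : m k ≤ s 0 := le_trans (hmles k) (hanti (Nat.zero_le k))
    nlinarith [hmpos k]
  have hwsum : Summable (fun k => ∫ ω, (τ k ω - m k)^2 ∂P) :=
    Summable.of_nonneg_of_le hw0 hwle (hm2sum.mul_left C)
  have hm2n : ∀ n, Summable (fun k => m (n + k)^2) := fun n =>
    hm2sum.comp_injective (fun a b h => by simpa using h)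
  -- a.e. summability
  have hAae : ∀ᵐ ω ∂P, Summable fun k => τ k ω := by
    have hmeas : ∀ k : ℕ, AEMeasurable (fun ω => ENNReal.ofReal (τ k ω)) P := fun k =>
      ((hL2 k).aestronglyMeasurable.aemeasurable).ennreal_ofReal
    have h1 : ∫⁻ ω, ∑' k, ENNReal.ofReal (τ k ω) ∂P = ∑' k, ∫⁻ ω, ENNReal.ofReal (τ k ω) ∂P :=
      lintegral_tsum hmeas
    have h2 : ∀ k, ∫⁻ ω, ENNReal.ofReal (τ k ω) ∂P = ENNReal.ofReal (m k) := by
      intro k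
      rw [hm k]
      exact (ofReal_integral_eq_lintegral_ofReal (hint k)
        (Filter.Eventually.of_forall (hτpos k))).symm
    have h3 : ∑' k, ENNReal.ofReal (m k) ≠ ⊤ := by
      rw [← ENNReal.ofReal_tsum_of_nonneg hm0 hsum]
      exact ENNReal.ofReal_ne_top
    have h4 : ∀ᵐ ω ∂P, (∑' k, ENNReal.ofReal (τ k ω)) < ⊤ := by
      apply ae_lt_top' (AEMeasurable.ennreal_tsum hmeas)
      rw [h1, tsum_congr h2]
      exact h3
    filter_upwards [h4] with ω hω
    have h5 := ENNReal.summable_toReal hω.ne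
    exact h5.congr fun k => ENNReal.toReal_ofReal (hτpos k ω)
  -- Chebyshev for tails
  have cheb : ∀ n : ℕ, ∀ c : ℝ, 0 < c →
      P {ω | c ≤ |T n ω - s n|} ≤
        ENNReal.ofReal (C * ∑' k, m (n + k)^2) / ENNReal.ofReal (c^2) := by
    intro n c hc
    apply aux_cheb P (fun k ω => τ (n + k) ω - m (n + k))
      (fun k => (hL2 (n + k)).sub (memLp_const _))
    · intro k
      rw [integral_sub (hint (n + k)) (integrable_const _), integral_const]
      simp only [measure_univ, probReal_univ, ENNReal.toReal_one, smul_eq_mul, one_mul]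
      rw [← hm (n + k)]
      ring
    · intro i j hij
      have h := hindep.indepFun (show n + i ≠ n + j by omega)
      exact h.comp (measurable_id.sub_const (m (n + i))) (measurable_id.sub_const (m (n + j)))
    · intro N
      calc ∑ k ∈ Finset.range N, ∫ ω, (τ (n + k) ω - m (n + k))^2 ∂P
          ≤ ∑' k, ∫ ω, (τ (n + k) ω - m (n + k))^2 ∂P := by
            apply Summable.sum_le_tsum _ (fun k _ => hw0 (n + k))
            exact hwsum.comp_injective (fun a b h => by simpa using h)
        _ ≤ ∑' k, C * m (n + k)^2 := by
            apply Summable.tsum_le_tsum (fun k => hwle (n + k))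
              (hwsum.comp_injective (fun a b h => by simpa using h))
              ((hm2n n).mul_left C)
        _ = C * ∑' k, m (n + k)^2 := tsum_mul_left
    · filter_upwards [hAae] with ω hσ
      have hτn : Summable fun k => τ (n + k) ω :=
        hσ.comp_injective (fun a b h => by simpa using h)
      have h1 := hτn.hasSum.tendsto_sum_nat
      have h2 := (hsummn n).hasSum.tendsto_sum_nat
      have h3 := h1.sub h2
      rw [← hT n ω, ← hs n] at h3
      exact h3.congr fun N => by rw [Finset.sum_sub_distrib]
    · exact hc
  -- KEY: per-ρ sandwich
  have KEY : ∀ ρ : ℝ, 0 < ρ → ρ < 1 → ∀ᵐ ω ∂P, ∀ᶠ n in atTop,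
      ρ^3 ≤ T n ω / s n ∧ T n ω / s n ≤ (2 - ρ)/ρ := by
    intro ρ hρ0 hρ1
    have hex : ∀ j : ℕ, ∃ nn, s nn ≤ s 0 * ρ ^ j := by
      intro j
      have hpos : 0 < s 0 * ρ^j := mul_pos (hspos 0) (pow_pos hρ0 j)
      obtain ⟨nn, hnn⟩ := (hs0.eventually (gt_mem_nhds hpos)).exists
      exact ⟨nn, hnn.le⟩
    set ν : ℕ → ℕ := fun j => Nat.find (hex j) with hν
    have hup : ∀ j, s (ν j) ≤ s 0 * ρ^j := fun j => Nat.find_spec (hex j)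
    have hmin : ∀ j i, i < ν j → s 0 * ρ^j < s i := by
      intro j i hi
      have h := Nat.find_min (hex j) (show i < Nat.find (hex j) from hi)
      exact lt_of_not_ge h
    have hmono : Monotone ν := by
      apply monotone_nat_of_le_succ
      intro j
      apply Nat.find_min' (hex j)
      calc s (ν (j+1)) ≤ s 0 * ρ^(j+1) := hup (j+1)
        _ ≤ s 0 * ρ^j := by
          apply mul_le_mul_of_nonneg_left _ (hsnn 0)
          exact pow_le_pow_of_le_one hρ0.le hρ1.le (by omega)
    have hinf : ∀ i, ∃ j, i < ν j := by
      intro i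
      obtain ⟨j, hj⟩ : ∃ j, s 0 * ρ^j < s i := by
        have h : Tendsto (fun j : ℕ => s 0 * ρ^j) atTop (nhds 0) := by
          simpa using (tendsto_pow_atTop_nhds_zero_of_lt_one hρ0.le hρ1).const_mul (s 0)
        exact (h.eventually (gt_mem_nhds (hspos i))).exists
      refine ⟨j, ?_⟩
      by_contra h
      push_neg at h
      have := hanti h
      linarith [hup j]
    obtain ⟨N, hN⟩ : ∃ N, ∀ n ≥ N, m n / s n < 1 - ρ := by
      have h := hms0.eventually (gt_mem_nhds (by linarith : (0:ℝ) < 1 - ρ))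
      exact eventually_atTop.1 h
    have hstep : ∀ n, N ≤ n → ρ * s n ≤ s (n+1) := by
      intro n hn
      have h1 := hN n hn
      rw [div_lt_iff₀ (hspos n)] at h1
      have h2 := hrec n
      nlinarith [hspos n]
    obtain ⟨J0, hJ0⟩ : ∃ J0, ∀ j, J0 ≤ j → N + 1 ≤ ν j := by
      obtain ⟨j0, hj0⟩ := hinf N
      exact ⟨j0, fun j hj => le_trans (by omega) (hmono hj)⟩
    have hlow : ∀ j, J0 ≤ j → s 0 * ρ^(j+1) ≤ s (ν j) := by
      intro j hj
      have hνj : N + 1 ≤ ν j := hJ0 j hj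
      obtain ⟨t, ht⟩ : ∃ t, ν j = t + 1 := ⟨ν j - 1, by omega⟩
      have htN : N ≤ t := by omega
      have h1 : s 0 * ρ^j < s t := hmin j t (by omega)
      have h2 : ρ * s t ≤ s (t+1) := hstep t htN
      rw [ht]
      calc s 0 * ρ^(j+1) = ρ * (s 0 * ρ^j) := by ring
        _ ≤ ρ * s t := by nlinarith
        _ ≤ s (t+1) := h2
    -- Borel–Cantelli
    set E : ℕ → Set Ω := fun j => {ω | (1-ρ) * s (ν j) ≤ |T (ν j) ω - s (ν j)|} with hE
    have h1ρ : (0:ℝ) < 1 - ρ := by linarith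
    have hEbound : ∀ j, P (E j) ≤
        ENNReal.ofReal (((1-ρ)^2)⁻¹) *
          ENNReal.ofReal ((∑' k, C * m (ν j + k)^2) / s (ν j)^2) := by
      intro j
      have hc : 0 < (1-ρ) * s (ν j) := mul_pos h1ρ (hspos _)
      have h1 := cheb (ν j) ((1-ρ) * s (ν j)) hc
      refine h1.trans ?_
      rw [← ENNReal.ofReal_div_of_pos (pow_pos hc 2)]
      rw [← ENNReal.ofReal_mul (by positivity)]
      apply ENNReal.ofReal_le_ofReal
      have htv : ∑' k, C * m (ν j + k)^2 = C * ∑' k, m (ν j + k)^2 := tsum_mul_left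
      rw [htv]
      have hser : (0:ℝ) ≤ C * ∑' k, m (ν j + k)^2 :=
        mul_nonneg hC0 (tsum_nonneg fun k => sq_nonneg _)
      have heq : ((1-ρ) * s (ν j))^2 = (1-ρ)^2 * s (ν j)^2 := by ring
      rw [heq]
      rw [div_le_iff₀ (mul_pos (pow_pos h1ρ 2) (pow_pos (hspos _) 2))]
      have hfe : ((1-ρ)^2)⁻¹ * (C * (∑' k, m (ν j + k)^2) / s (ν j)^2) * ((1-ρ)^2 * s (ν j)^2)
          = C * (∑' k, m (ν j + k)^2) := by
        have hs2 : s (ν j) ≠ 0 := (hspos _).ne'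
        have hρne : (1-ρ) ≠ 0 := h1ρ.ne'
        field_simp
      rw [hfe]
    have hEsum : ∑' j, P (E j) ≠ ⊤ := by
      have hbig : ∑' j, ENNReal.ofReal ((∑' k, C * m (ν j + k)^2) / s (ν j)^2) ≠ ⊤ := by
        apply aux_tail_sum (fun k => C * m k ^2) s (fun k => mul_nonneg hC0 (sq_nonneg _))
          (hm2sum.mul_left C) hspos hanti _ ρ hρ0 hρ1 ν hmono hup J0 hlow hinf
        have h := hsq.mul_left C
        apply h.congr
        intro k
        rw [div_pow]
        ring
      have h2 : ∑' j, P (E j) ≤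
          ENNReal.ofReal (((1-ρ)^2)⁻¹) *
            ∑' j, ENNReal.ofReal ((∑' k, C * m (ν j + k)^2) / s (ν j)^2) := by
        rw [← ENNReal.tsum_mul_left]
        exact Summable.tsum_le_tsum hEbound ENNReal.summable ENNReal.summable
      have h3 : ENNReal.ofReal (((1-ρ)^2)⁻¹) *
          (∑' j, ENNReal.ofReal ((∑' k, C * m (ν j + k)^2) / s (ν j)^2)) ≠ ⊤ :=
        ENNReal.mul_ne_top ENNReal.ofReal_ne_top hbig
      exact fun htop => h3 (top_le_iff.1 (htop ▸ h2))
    have hBC := ae_eventually_notMem hEsum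
    -- deterministic sandwich
    filter_upwards [hBC, hAae] with ω hBCω hσ
    obtain ⟨J1, hJ1⟩ := eventually_atTop.1 hBCω
    -- tail sums for ω
    have hτn : ∀ n, Summable fun k => τ (n + k) ω :=
      fun n => hσ.comp_injective (fun a b h => by simpa using h)
    have hTanti : Antitone (fun n => T n ω) := by
      apply antitone_nat_of_succ_le
      intro n
      have h1 : T n ω = τ n ω + T (n+1) ω := by
        rw [hT n ω, hT (n+1) ω, Summable.tsum_eq_zero_add (hτn n)]
        simp only [Nat.add_zero]
        congr 1
        exact tsum_congr fun k => by congr 1; omega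
      have := hτpos n ω
      linarith
    have hT0 : ∀ n, 0 ≤ T n ω := fun n => by
      rw [hT n ω]; exact tsum_nonneg fun k => hτpos _ ω
    set J2 := max J0 J1 with hJ2
    rw [eventually_atTop]
    refine ⟨ν J2, fun n hn => ?_⟩
    -- locate n between ν jj and ν (jj+1)
    have hν0 : ν 0 = 0 := by
      have : s 0 ≤ s 0 * ρ ^ 0 := by simp
      exact Nat.le_zero.1 (Nat.find_min' (hex 0) this)
    have hexj : ∃ j, n < ν (j+1) := by
      obtain ⟨j', hj'⟩ := hinf n
      rcases Nat.eq_zero_or_pos j' with h0 | hpos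
      · rw [h0, hν0] at hj'; omega
      · exact ⟨j' - 1, by have : j' - 1 + 1 = j' := by omega
                          rw [this]; exact hj'⟩
    set jj := Nat.find hexj with hjjdef
    have hjj1 : n < ν (jj + 1) := Nat.find_spec hexj
    have hjj2 : ν jj ≤ n := by
      rcases Nat.eq_zero_or_pos jj with h0 | hpos
      · rw [h0, hν0]; omega
      · have h := Nat.find_min hexj (show jj - 1 < Nat.find hexj by omega)
        push_neg at h
        have : jj - 1 + 1 = jj := by omega
        rwa [this] at h
    have hJ2jj : J2 ≤ jj := by
      by_contra h
      push_neg at h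
      have h1 : ν (jj + 1) ≤ ν J2 := hmono (by omega)
      omega
    have hjJ0 : J0 ≤ jj := le_trans (le_max_left _ _) hJ2jj
    have hjJ1 : J1 ≤ jj := le_trans (le_max_right _ _) hJ2jj
    have hB1 : |T (ν jj) ω - s (ν jj)| < (1-ρ) * s (ν jj) := by
      have h := hJ1 jj hjJ1
      rw [hE] at h
      simp only [Set.mem_setOf_eq, not_le] at h
      exact h
    have hB2 : |T (ν (jj+1)) ω - s (ν (jj+1))| < (1-ρ) * s (ν (jj+1)) := by
      have h := hJ1 (jj+1) (by omega)
      rw [hE] at h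
      simp only [Set.mem_setOf_eq, not_le] at h
      exact h
    rw [abs_lt] at hB1 hB2
    have hTup : T (ν jj) ω ≤ (2 - ρ) * s (ν jj) := by linarith [hB1.2]
    have hTlo : ρ * s (ν (jj+1)) ≤ T (ν (jj+1)) ω := by linarith [hB2.1]
    have hsn_lo : s 0 * ρ^(jj+1) < s n := hmin (jj+1) n hjj1
    have hsn_up : s n ≤ s (ν jj) := hanti hjj2
    have hsjj_up : s (ν jj) ≤ s 0 * ρ^jj := hup jj
    have hsjj1_lo : s 0 * ρ^(jj+2) ≤ s (ν (jj+1)) := by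
      have := hlow (jj+1) (by omega)
      convert this using 2
    have hTn_up : T n ω ≤ T (ν jj) ω := hTanti hjj2
    have hTn_lo : T (ν (jj+1)) ω ≤ T n ω := hTanti hjj1.le
    constructor
    · -- lower bound
      rw [le_div_iff₀ (hspos n)]
      have c1 : ρ^3 * s n ≤ ρ^3 * (s 0 * ρ^jj) := by
        apply mul_le_mul_of_nonneg_left _ (pow_nonneg hρ0.le 3)
        linarith
      have c2 : ρ^3 * (s 0 * ρ^jj) = ρ * (s 0 * ρ^(jj+2)) := by ring
      have c3 : ρ * (s 0 * ρ^(jj+2)) ≤ ρ * s (ν (jj+1)) := by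
        apply mul_le_mul_of_nonneg_left hsjj1_lo hρ0.le
      linarith
    · -- upper bound
      rw [div_le_iff₀ (hspos n)]
      have c1 : T n ω ≤ (2 - ρ) * (s 0 * ρ^jj) := by
        have : (2-ρ) * s (ν jj) ≤ (2-ρ) * (s 0 * ρ^jj) :=
          mul_le_mul_of_nonneg_left hsjj_up (by linarith)
        linarith
      have c2 : (2 - ρ)/ρ * (s 0 * ρ^(jj+1)) = (2 - ρ) * (s 0 * ρ^jj) := by
        field_simp
        ring
      have c3 : (2 - ρ)/ρ * (s 0 * ρ^(jj+1)) ≤ (2 - ρ)/ρ * s n := by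
        apply mul_le_mul_of_nonneg_left hsn_lo.le
        exact div_nonneg (by linarith) hρ0.le
      linarith
  -- final assembly
  have hall : ∀ᵐ ω ∂P, ∀ i : ℕ, ∀ᶠ n in atTop,
      (1 - 1/(i+2 : ℝ))^3 ≤ T n ω / s n ∧
        T n ω / s n ≤ (2 - (1 - 1/(i+2 : ℝ)))/(1 - 1/(i+2 : ℝ)) := by
    rw [ae_all_iff]
    intro i
    have hi2 : (2:ℝ) ≤ (i:ℝ) + 2 := by
      have : (0:ℝ) ≤ (i:ℝ) := Nat.cast_nonneg i
      linarith
    have hinv : 1/((i:ℝ)+2) ≤ 1/2 := by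
      apply div_le_div_of_nonneg_left (by norm_num) (by norm_num) hi2
    have hinvpos : 0 < 1/((i:ℝ)+2) := by positivity
    exact KEY _ (by linarith) (by linarith)
  filter_upwards [hall] with ω hω
  rw [Metric.tendsto_atTop]
  intro ε hε
  obtain ⟨i, hi⟩ : ∃ i : ℕ, 4/((i:ℝ)+2) < ε := by
    obtain ⟨i, hi⟩ := exists_nat_gt (4/ε)
    refine ⟨i, ?_⟩
    rw [div_lt_iff₀ (by positivity)]
    rw [div_lt_iff₀ hε] at hi
    nlinarith [hε]
  obtain ⟨N', hN'⟩ := eventually_atTop.1 (hω i)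
  refine ⟨N', fun n hn => ?_⟩
  obtain ⟨hx1, hx2⟩ := hN' n hn
  set δ : ℝ := 1/((i:ℝ)+2) with hδdef
  have hδpos : 0 < δ := by positivity
  have hδhalf : δ ≤ 1/2 := by
    apply div_le_div_of_nonneg_left (by norm_num) (by norm_num)
    have : (0:ℝ) ≤ (i:ℝ) := Nat.cast_nonneg i
    linarith
  have hρhalf : (1:ℝ)/2 ≤ 1 - δ := by linarith
  have hρpos : (0:ℝ) < 1 - δ := by linarith
  have hδε : 4 * δ < ε := by
    rw [hδdef]
    calc 4 * (1/((i:ℝ)+2)) = 4/((i:ℝ)+2) := by ring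
      _ < ε := hi
  rw [Real.dist_eq, abs_lt]
  constructor
  · -- -ε < T/s - 1
    have h1 : (1 - δ)^3 ≤ T n ω / s n := hx1
    have hcube : 1 - 3*δ ≤ (1-δ)^3 := by
      nlinarith [mul_nonneg (mul_nonneg hδpos.le hδpos.le) (by linarith : (0:ℝ) ≤ 3 - δ)]
    linarith
  · -- T/s - 1 < ε
    have h2 : T n ω / s n ≤ (2 - (1 - δ))/(1 - δ) := hx2
    rw [le_div_iff₀ hρpos] at h2
    nlinarith [h2, hδpos, hδhalf, hδε, hε]
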